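/- Every satisfiable normal-form FO²MOD[≤,succ] formula φ satisfiable over finite words has a model of size at most f(φ), where f(φ) is the number of (l₁,…,l_m)-full types over the signature of φ. -/

import Mathlib

/-! FO²MOD[≤,succ] over finite words: small model property. -/

/-- The five order formulas over words. -/
inductive WOrd where
  | eq | succ | pred | farR | farL
deriving DecidableEq

instance : Fintype WOrd :=
  ⟨{.eq, .succ, .pred, .farR, .farL}, by intro x; cases x <;> simp⟩

/-- The unique order formula holding between two positions of a word. -/
def ordOf {N : ℕ} (i j : Fin N) : WOrd :=
  if i = j then .eq
  else if (j : ℕ) = (i : ℕ) + 1 then .succ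
  else if (i : ℕ) = (j : ℕ) + 1 then .pred
  else if i < j then .farR
  else .farL

/-- A normal-form FO²MOD formula
`∀x∀y χ ∧ ⋀ᵢ ∀x∃y χᵢ ∧ ⋀ⱼ ∀x ∃^{⋈ⱼ kⱼ,lⱼ} y ψⱼ` over unary signature `τ`.
Quantifier-free two-variable formulas are represented by their truth value as a
function of the 1-type of `x`, the 1-type of `y` and the order formula relating
`x` and `y`. `isLE j` tells whether `⋈ⱼ` is `≤` (otherwise `≥`). -/
structure NF (τ : Type) where
  n : ℕ
  m : ℕ
  npos : 0 < n
  mpos : 0 < m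
  chi : (τ → Bool) → (τ → Bool) → WOrd → Bool
  chis : Fin n → (τ → Bool) → (τ → Bool) → WOrd → Bool
  psi : Fin m → (τ → Bool) → (τ → Bool) → WOrd → Bool
  isLE : Fin m → Bool
  k : Fin m → ℕ
  l : Fin m → ℕ
  lpos : ∀ j, 0 < l j
  klt : ∀ j, k j < l j

/-- The comparison `a ⋈ⱼ kⱼ` of the `j`-th modulo conjunct. -/
def NF.bow {τ : Type} (φ : NF τ) (j : Fin φ.m) (a : ℕ) : Prop :=
  if φ.isLE j then a ≤ φ.k j else φ.k j ≤ a

/-- Satisfaction of a normal-form formula in the finite word of length `N`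
whose position `i` carries exactly the unary predicates `lab i`. -/
def WSat {τ : Type} (φ : NF τ) (N : ℕ) (lab : Fin N → τ → Bool) : Prop :=
  (∀ i j : Fin N, φ.chi (lab i) (lab j) (ordOf i j) = true) ∧
  (∀ c : Fin φ.n, ∀ i : Fin N, ∃ j : Fin N, φ.chis c (lab i) (lab j) (ordOf i j) = true) ∧
  (∀ c : Fin φ.m, ∀ i : Fin N,
    φ.bow c ((Finset.univ.filter
      fun j : Fin N => φ.psi c (lab i) (lab j) (ordOf i j) = true).card % φ.l c))

/-- `f(φ)`: the number of `(l₁,…,l_m)`-full types over the signature of `φ`. -/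
def fsize {τ : Type} [Fintype τ] (φ : NF τ) : ℕ :=
  (2 * ∏ j, φ.l j) ^ (5 * 2 ^ Fintype.card τ)

/-! ### Auxiliary development -/


open Finset

/-- ℕ-level order formula. -/
def nOrd (a b : ℕ) : WOrd :=
  if a = b then .eq else if b = a + 1 then .succ else if a = b + 1 then .pred
  else if a < b then .farR else .farL

lemma ordOf_eq_nOrd {N : ℕ} (i j : Fin N) : ordOf i j = nOrd i.val j.val := by
  unfold ordOf nOrd
  rcases i with ⟨a, ha⟩; rcases j with ⟨b, hb⟩
  simp only [Fin.mk.injEq, Fin.mk_lt_mk]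

@[simp] lemma nOrd_eq_iff {a b : ℕ} : nOrd a b = .eq ↔ a = b := by
  unfold nOrd; split_ifs <;> simp_all

@[simp] lemma nOrd_succ_iff {a b : ℕ} : nOrd a b = .succ ↔ b = a + 1 := by
  unfold nOrd; split_ifs <;> simp_all

@[simp] lemma nOrd_pred_iff {a b : ℕ} : nOrd a b = .pred ↔ a = b + 1 := by
  unfold nOrd; split_ifs <;> simp_all <;> omega

@[simp] lemma nOrd_farR_iff {a b : ℕ} : nOrd a b = .farR ↔ a + 2 ≤ b := by
  unfold nOrd; split_ifs <;> simp_all <;> omega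

@[simp] lemma nOrd_farL_iff {a b : ℕ} : nOrd a b = .farL ↔ b + 2 ≤ a := by
  unfold nOrd; split_ifs <;> simp_all <;> omega

lemma nOrd_shift (a b s : ℕ) : nOrd (a + s) (b + s) = nOrd a b := by
  unfold nOrd; split_ifs <;> first | rfl | (exfalso; omega)

section Counts
variable {τ : Type} [Fintype τ] [DecidableEq τ]

/-- count of positions `j < M` with order `w` seen from `i` and label `β`. -/
def cntL (Λ : ℕ → τ → Bool) (M i : ℕ) (w : WOrd) (β : τ → Bool) : ℕ :=
  ((range M).filter fun j => nOrd i j = w ∧ Λ j = β).card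

/-- count of `β`-labelled positions in `[a, b)`. -/
def Rcnt (Λ : ℕ → τ → Bool) (β : τ → Bool) (a b : ℕ) : ℕ :=
  ((Ico a b).filter fun j => Λ j = β).card

variable (Λ : ℕ → τ → Bool) (β : τ → Bool)

lemma cnt_pos_iff (M i : ℕ) (w : WOrd) :
    0 < cntL Λ M i w β ↔ ∃ j, j < M ∧ nOrd i j = w ∧ Λ j = β := by
  simp [cntL, card_pos, filter_nonempty_iff, mem_range]

lemma card_filter_point (s : Finset ℕ) (a : ℕ) (p : ℕ → Prop) [DecidablePred p] :
    (s.filter fun j => j = a ∧ p j).card = if a ∈ s ∧ p a then 1 else 0 := by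
  have h : s.filter (fun j => j = a ∧ p j) = if a ∈ s ∧ p a then {a} else ∅ := by
    split_ifs with h
    · ext j; simp only [mem_filter, mem_singleton]
      constructor
      · rintro ⟨_, rfl, _⟩; rfl
      · rintro rfl; exact ⟨h.1, rfl, h.2⟩
    · ext j; simp only [mem_filter, notMem_empty, iff_false, not_and]
      rintro hj rfl hp; exact h ⟨hj, hp⟩
  rw [h]; split_ifs <;> simp

lemma cntL_eq {M i : ℕ} (hi : i < M) :
    cntL Λ M i .eq β = if Λ i = β then 1 else 0 := by
  unfold cntL
  rw [Finset.filter_congr (q := fun j => j = i ∧ Λ j = β)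
    (fun j _ => by simp only [nOrd_eq_iff]; constructor <;> rintro ⟨h1, h2⟩ <;> exact ⟨h1.symm, h2⟩)]
  rw [card_filter_point]
  simp [hi, mem_range]

lemma cntL_succ (M i : ℕ) :
    cntL Λ M i .succ β = if i + 1 < M ∧ Λ (i+1) = β then 1 else 0 := by
  unfold cntL
  rw [Finset.filter_congr (q := fun j => j = i + 1 ∧ Λ j = β)
    (fun j _ => by simp only [nOrd_succ_iff])]
  rw [card_filter_point]; simp [mem_range]

lemma cntL_pred {M i : ℕ} (hi : i < M) :
    cntL Λ M i .pred β = if 0 < i ∧ Λ (i-1) = β then 1 else 0 := by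
  unfold cntL
  rw [Finset.filter_congr (q := fun j => j = i - 1 ∧ (0 < i ∧ Λ j = β))
    (fun j _ => by
      simp only [nOrd_pred_iff]; constructor
      · rintro ⟨h1, h2⟩; exact ⟨by omega, by omega, h2⟩
      · rintro ⟨h1, h2, h3⟩; exact ⟨by omega, h3⟩)]
  rw [card_filter_point]
  simp [mem_range, show i - 1 < M by omega]

lemma cntL_farR (M i : ℕ) : cntL Λ M i .farR β = Rcnt Λ β (i+2) M := by
  unfold cntL Rcnt
  congr 1
  ext j
  simp only [mem_filter, mem_range, mem_Ico, nOrd_farR_iff]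
  tauto

lemma cntL_farL {M i : ℕ} (hi : i < M) : cntL Λ M i .farL β = Rcnt Λ β 0 (i-1) := by
  unfold cntL Rcnt
  congr 1
  ext j
  simp only [mem_filter, mem_range, mem_Ico, nOrd_farL_iff]
  constructor
  · rintro ⟨_, h1, h2⟩; exact ⟨⟨by omega, by omega⟩, h2⟩
  · rintro ⟨⟨_, h1⟩, h2⟩; exact ⟨by omega, by omega, h2⟩

lemma Rcnt_split {a c b : ℕ} (h1 : a ≤ c) (h2 : c ≤ b) :
    Rcnt Λ β a b = Rcnt Λ β a c + Rcnt Λ β c b := by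
  unfold Rcnt
  rw [← Finset.card_union_of_disjoint
    (Finset.disjoint_filter_filter (Finset.Ico_disjoint_Ico_consecutive a c b)),
    ← Finset.filter_union, Finset.Ico_union_Ico_eq_Ico h1 h2]

lemma Rcnt_congr {Λ' : ℕ → τ → Bool} {a b : ℕ} (h : ∀ j, a ≤ j → j < b → Λ' j = Λ j) :
    Rcnt Λ' β a b = Rcnt Λ β a b := by
  unfold Rcnt
  congr 1
  apply Finset.filter_congr
  intro j hj
  rw [mem_Ico] at hj
  rw [h j hj.1 hj.2]

lemma Rcnt_shift {Λ' : ℕ → τ → Bool} {s a b : ℕ} (h : ∀ j, a ≤ j → j < b → Λ' j = Λ (j + s)) :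
    Rcnt Λ' β a b = Rcnt Λ β (a + s) (b + s) := by
  unfold Rcnt
  apply Finset.card_bij (fun j _ => j + s)
  · intro j hj
    simp only [mem_filter, mem_Ico] at hj ⊢
    exact ⟨⟨by omega, by omega⟩, by rw [← h j hj.1.1 hj.1.2]; exact hj.2⟩
  · intro a1 h1 a2 h2 hh; omega
  · intro b' hb'
    simp only [mem_filter, mem_Ico] at hb'
    refine ⟨b' - s, ?_, by omega⟩
    simp only [mem_filter, mem_Ico]
    have e : b' - s + s = b' := by omega
    exact ⟨⟨by omega, by omega⟩, by rw [h (b'-s) (by omega) (by omega), e]; exact hb'.2⟩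

lemma Rcnt_single {a : ℕ} : Rcnt Λ β a (a+1) = if Λ a = β then 1 else 0 := by
  unfold Rcnt
  rw [Nat.Ico_succ_singleton, Finset.filter_singleton]
  split_ifs <;> simp

lemma Rcnt_zero {a b : ℕ} (h : b ≤ a) : Rcnt Λ β a b = 0 := by
  unfold Rcnt; rw [Finset.Ico_eq_empty (by omega)]; simp

lemma R_left {M i : ℕ} (hi : i < M) :
    Rcnt Λ β 0 i = cntL Λ M i .farL β + cntL Λ M i .pred β := by
  rw [cntL_farL Λ β hi, cntL_pred Λ β hi]
  rcases Nat.eq_zero_or_pos i with h | h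
  · subst h; simp [Rcnt_zero]
  · have h2 : Rcnt Λ β (i-1) i = if Λ (i-1) = β then 1 else 0 := by
      have := Rcnt_single Λ β (a := i-1); rwa [show i-1+1 = i by omega] at this
    rw [Rcnt_split Λ β (Nat.zero_le (i-1)) (by omega), h2]
    congr 1
    split_ifs <;> simp_all

lemma R_right {M i : ℕ} (hi : i < M) :
    Rcnt Λ β (i+1) M = cntL Λ M i .succ β + cntL Λ M i .farR β := by
  rw [cntL_succ, cntL_farR]
  rcases lt_or_ge (i+1) M with h | h
  · rw [Rcnt_split Λ β (show i+1 ≤ i+2 by omega) (show i+2 ≤ M by omega), Rcnt_single]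
    congr 1
    split_ifs <;> simp_all
  · rw [Rcnt_zero Λ β (by omega), Rcnt_zero Λ β (by omega)]
    have : ¬(i+1 < M) := by omega
    simp [this]

lemma finCard (M : ℕ) (p : ℕ → Prop) [DecidablePred p] :
    (Finset.univ.filter fun j : Fin M => p j.val).card = ((range M).filter p).card := by
  rw [Finset.card_filter, Finset.card_filter,
    ← Fin.sum_univ_eq_sum_range (fun j => if p j then (1:ℕ) else 0) M]

lemma decomp (M i : ℕ) (G : (τ → Bool) → WOrd → Bool) :
    ((range M).filter fun j => G (Λ j) (nOrd i j) = true).card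
    = ∑ β : τ → Bool, ∑ w : WOrd, if G β w = true then cntL Λ M i w β else 0 := by
  have key : ∀ j : ℕ, (if G (Λ j) (nOrd i j) = true then (1:ℕ) else 0)
      = ∑ β : τ → Bool, ∑ w : WOrd,
          if (β = Λ j ∧ w = nOrd i j) ∧ G β w = true then 1 else 0 := by
    intro j
    have step : ∀ β : τ → Bool, ∀ w : WOrd,
        (if (β = Λ j ∧ w = nOrd i j) ∧ G β w = true then (1:ℕ) else 0)
        = if β = Λ j then (if w = nOrd i j then (if G β w = true then 1 else 0) else 0) else 0 := by
      intro β w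
      by_cases h1 : β = Λ j <;> by_cases h2 : w = nOrd i j <;>
        by_cases h3 : G β w = true <;> simp [h1, h2, h3]
    simp only [step]
    simp [Finset.sum_ite_eq']
  rw [Finset.card_filter]
  rw [Finset.sum_congr rfl (fun j _ => key j), Finset.sum_comm]
  apply Finset.sum_congr rfl; intro β _
  rw [Finset.sum_comm]
  apply Finset.sum_congr rfl; intro w _
  by_cases hG : G β w = true
  · simp only [hG, and_true, if_true]
    rw [cntL, Finset.card_filter]
    apply Finset.sum_congr rfl; intro j _
    have h : ((β = Λ j ∧ w = nOrd i j)) ↔ (nOrd i j = w ∧ Λ j = β) := by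
      constructor
      · rintro ⟨a, b⟩; exact ⟨b.symm, a.symm⟩
      · rintro ⟨a, b⟩; exact ⟨b.symm, a.symm⟩
    simp [h]
  · simp [hG]

lemma sum_mod_congr {A : Type} [Fintype A] {B : Type} [Fintype B] (f g : A → B → ℕ) (n : ℕ)
    (h : ∀ a b, f a b % n = g a b % n) :
    (∑ a, ∑ b, f a b) % n = (∑ a, ∑ b, g a b) % n := by
  rw [Finset.sum_nat_mod Finset.univ n (fun a => ∑ b, f a b),
      Finset.sum_nat_mod Finset.univ n (fun a => ∑ b, g a b)]
  congr 1
  apply Finset.sum_congr rfl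
  intro a _
  rw [Finset.sum_nat_mod Finset.univ n (fun b => f a b),
      Finset.sum_nat_mod Finset.univ n (fun b => g a b)]
  congr 1
  exact Finset.sum_congr rfl (fun b _ => h a b)

lemma mod_helper {n a d : ℕ} (h : d % n = 0) : (a + d) % n = a % n := by
  have h0 : Nat.ModEq n d 0 := by unfold Nat.ModEq; simpa using h
  exact Nat.ModEq.add_left a h0

/-- extension of a word labelling to all of ℕ. -/
def Lext {N : ℕ} (lab : Fin N → τ → Bool) : ℕ → τ → Bool :=
  fun a => if h : a < N then lab ⟨a, h⟩ else fun _ => false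

lemma Lext_eq {N : ℕ} (lab : Fin N → τ → Bool) (j : Fin N) : Lext lab j.val = lab j := by
  simp [Lext]

end Counts

section Shrink
variable {τ : Type} [Fintype τ] [DecidableEq τ]

theorem shrink (φ : NF τ) (N : ℕ) (lab : Fin N → τ → Bool) (hW : WSat φ N lab)
    (P Q : ℕ) (hPQ : P < Q) (hQN : Q < N)
    (hbit : ∀ w β, 0 < cntL (Lext lab) N P w β ↔ 0 < cntL (Lext lab) N Q w β)
    (hmod : ∀ w β (c : Fin φ.m),
      cntL (Lext lab) N P w β % φ.l c = cntL (Lext lab) N Q w β % φ.l c) :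
    ∃ lab' : Fin (N - (Q - P)) → τ → Bool, WSat φ (N - (Q - P)) lab' := by
  set L : ℕ → τ → Bool := Lext lab with hLdef
  set s : ℕ := Q - P with hs
  set N' : ℕ := N - s with hN'
  have hsc : P + s = Q := by omega
  have hNs : N' + s = N := by omega
  have hPN' : P < N' := by omega
  set L' : ℕ → τ → Bool :=
    fun a => if a < N' then (if a ≤ P then L a else L (a + s)) else fun _ => false with hL'def
  have hL'lo : ∀ a, a ≤ P → L' a = L a := by
    intro a ha
    rw [hL'def]
    simp only [if_pos (show a < N' by omega), if_pos ha]
  have hL'hi : ∀ a, P < a → a < N' → L' a = L (a + s) := by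
    intro a h1 h2
    rw [hL'def]
    simp only [if_pos h2, if_neg (show ¬ a ≤ P by omega)]
  have hLP : L P = L Q := by
    have h1 : 0 < cntL L N P .eq (L P) := by
      rw [cntL_eq L (L P) (show P < N by omega)]; simp
    have h2 := (hbit .eq (L P)).mp h1
    rw [cntL_eq L (L P) (show Q < N by omega)] at h2
    by_contra hne
    rw [if_neg (fun hh => hne hh.symm)] at h2
    exact absurd h2 (by omega)
  -- the deleted-segment count is ≡ 0 mod every l c
  have hD : ∀ (β : τ → Bool) (c : Fin φ.m), Rcnt L β (P+1) (Q+1) % φ.l c = 0 := by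
    intro β c
    have e1 := R_right L β (show P < N by omega)
    have e2 := R_right L β (show Q < N by omega)
    have esplit : Rcnt L β (P+1) N = Rcnt L β (P+1) (Q+1) + Rcnt L β (Q+1) N :=
      Rcnt_split L β (by omega) (by omega)
    have hS : Rcnt L β (P+1) (Q+1) + (cntL L N Q .succ β + cntL L N Q .farR β)
        = cntL L N P .succ β + cntL L N P .farR β := by omega
    have hm : Nat.ModEq (φ.l c) (cntL L N P .succ β + cntL L N P .farR β)
        (cntL L N Q .succ β + cntL L N Q .farR β) :=
      Nat.ModEq.add (hmod .succ β c) (hmod .farR β c)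
    have h3 : Nat.ModEq (φ.l c) (Rcnt L β (P+1) (Q+1) + (cntL L N Q .succ β + cntL L N Q .farR β))
        (0 + (cntL L N Q .succ β + cntL L N Q .farR β)) := by
      rw [hS, Nat.zero_add]; exact hm
    have h4 := Nat.ModEq.add_right_cancel (Nat.ModEq.refl _) h3
    simpa [Nat.ModEq] using h4
  -- per-(w,β) congruence of counts
  have hB : ∀ x, x < N' → ∀ w β (c : Fin φ.m),
      cntL L' N' x w β % φ.l c = cntL L N (if x ≤ P then x else x + s) w β % φ.l c := by
    intro x hx w β c
    rcases lt_trichotomy x P with hlt | heq | hgt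
    · rw [if_pos (show x ≤ P by omega)]
      cases w with
      | eq =>
          rw [cntL_eq L' β hx, cntL_eq L β (by omega), hL'lo x (by omega)]
      | succ =>
          rw [cntL_succ, cntL_succ]
          refine congrArg (· % φ.l c) (if_congr ?_ rfl rfl)
          rw [hL'lo (x+1) (by omega)]
          constructor
          · rintro ⟨_, h2⟩; exact ⟨by omega, h2⟩
          · rintro ⟨_, h2⟩; exact ⟨by omega, h2⟩
      | pred =>
          rw [cntL_pred L' β hx, cntL_pred L β (by omega), hL'lo (x-1) (by omega)]
      | farL =>
          rw [cntL_farL L' β hx, cntL_farL L β (by omega),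
            Rcnt_congr L β (fun j h1 h2 => hL'lo j (by omega))]
      | farR =>
          rw [cntL_farR, cntL_farR]
          have e1 : Rcnt L' β (x+2) N' = Rcnt L' β (x+2) (P+1) + Rcnt L' β (P+1) N' :=
            Rcnt_split L' β (by omega) (by omega)
          have e2 : Rcnt L' β (x+2) (P+1) = Rcnt L β (x+2) (P+1) :=
            Rcnt_congr L β (fun j h1 h2 => hL'lo j (by omega))
          have e3 : Rcnt L' β (P+1) N' = Rcnt L β (Q+1) N := by
            have := Rcnt_shift L β (Λ' := L') (s := s) (a := P+1) (b := N')
              (fun j h1 h2 => hL'hi j (by omega) h2)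
            rwa [show P+1+s = Q+1 by omega, show N'+s = N by omega] at this
          have e4 : Rcnt L β (x+2) N
              = Rcnt L β (x+2) (P+1) + Rcnt L β (P+1) (Q+1) + Rcnt L β (Q+1) N := by
            rw [Rcnt_split L β (show x+2 ≤ P+1 by omega) (show P+1 ≤ N by omega),
              Rcnt_split L β (show P+1 ≤ Q+1 by omega) (show Q+1 ≤ N by omega)]
            omega
          rw [e1, e2, e3, e4,
            show Rcnt L β (x+2) (P+1) + Rcnt L β (P+1) (Q+1) + Rcnt L β (Q+1) N
              = (Rcnt L β (x+2) (P+1) + Rcnt L β (Q+1) N) + Rcnt L β (P+1) (Q+1) by omega]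
          exact (mod_helper (hD β c)).symm
    · subst heq
      rw [if_pos le_rfl]
      cases w with
      | eq => rw [cntL_eq L' β hx, cntL_eq L β (by omega), hL'lo x le_rfl]
      | pred => rw [cntL_pred L' β hx, cntL_pred L β (by omega), hL'lo (x-1) (by omega)]
      | farL =>
          rw [cntL_farL L' β hx, cntL_farL L β (by omega),
            Rcnt_congr L β (fun j h1 h2 => hL'lo j (by omega))]
      | succ =>
          have key : cntL L' N' x .succ β = cntL L N Q .succ β := by
            rw [cntL_succ, cntL_succ]
            refine if_congr ?_ rfl rfl
            constructor
            · rintro ⟨h1, h2⟩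
              rw [hL'hi (x+1) (by omega) h1, show x+1+s = Q+1 by omega] at h2
              exact ⟨by omega, h2⟩
            · rintro ⟨h1, h2⟩
              have hc : x + 1 < N' := by omega
              rw [hL'hi (x+1) (by omega) hc, show x+1+s = Q+1 by omega]
              exact ⟨hc, h2⟩
          rw [key]; exact (hmod .succ β c).symm
      | farR =>
          have key : cntL L' N' x .farR β = cntL L N Q .farR β := by
            rw [cntL_farR, cntL_farR]
            have := Rcnt_shift L β (Λ' := L') (s := s) (a := x+2) (b := N')
              (fun j h1 h2 => hL'hi j (by omega) h2)
            rwa [show x+2+s = Q+2 by omega, show N'+s = N by omega] at this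
          rw [key]; exact (hmod .farR β c).symm
    · rw [if_neg (show ¬ x ≤ P by omega)]
      have hxN : x + s < N := by omega
      cases w with
      | eq => rw [cntL_eq L' β hx, cntL_eq L β hxN, hL'hi x hgt hx]
      | succ =>
          rw [cntL_succ, cntL_succ]
          refine congrArg (· % φ.l c) (if_congr ?_ rfl rfl)
          constructor
          · rintro ⟨h1, h2⟩
            rw [hL'hi (x+1) (by omega) h1, show x+1+s = x+s+1 by omega] at h2
            exact ⟨by omega, h2⟩
          · rintro ⟨h1, h2⟩
            have hc : x + 1 < N' := by omega
            rw [hL'hi (x+1) (by omega) hc, show x+1+s = x+s+1 by omega]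
            exact ⟨hc, h2⟩
      | farR =>
          rw [cntL_farR, cntL_farR]
          have := Rcnt_shift L β (Λ' := L') (s := s) (a := x+2) (b := N')
            (fun j h1 h2 => hL'hi j (by omega) h2)
          rw [this, show x+2+s = x+s+2 by omega, show N'+s = N by omega]
      | pred =>
          rw [cntL_pred L' β hx, cntL_pred L β hxN]
          refine congrArg (· % φ.l c) (if_congr ?_ rfl rfl)
          rcases Nat.lt_or_ge (P+1) x with h2 | h2
          · rw [hL'hi (x-1) (by omega) (by omega), show x-1+s = x+s-1 by omega]
            constructor
            · rintro ⟨_, h3⟩; exact ⟨by omega, h3⟩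
            · rintro ⟨_, h3⟩; exact ⟨by omega, h3⟩
          · have hxe : x = P + 1 := by omega
            rw [hxe, show P+1-1 = P by omega, hL'lo P le_rfl, hLP,
              show P+1+s-1 = Q by omega]
            constructor
            · rintro ⟨_, h3⟩; exact ⟨by omega, h3⟩
            · rintro ⟨_, h3⟩; exact ⟨by omega, h3⟩
      | farL =>
          rcases Nat.lt_or_ge (P+1) x with h2 | h2
          · rw [cntL_farL L' β hx, cntL_farL L β hxN]
            have e1 : Rcnt L' β 0 (x-1) = Rcnt L' β 0 (P+1) + Rcnt L' β (P+1) (x-1) :=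
              Rcnt_split L' β (by omega) (by omega)
            have e2 : Rcnt L' β 0 (P+1) = Rcnt L β 0 (P+1) :=
              Rcnt_congr L β (fun j h1' h2' => hL'lo j (by omega))
            have e3 : Rcnt L' β (P+1) (x-1) = Rcnt L β (Q+1) (x+s-1) := by
              have := Rcnt_shift L β (Λ' := L') (s := s) (a := P+1) (b := x-1)
                (fun j h1' h2' => hL'hi j (by omega) (by omega))
              rwa [show P+1+s = Q+1 by omega, show x-1+s = x+s-1 by omega] at this
            have e4 : Rcnt L β 0 (x+s-1)
                = Rcnt L β 0 (P+1) + Rcnt L β (P+1) (Q+1) + Rcnt L β (Q+1) (x+s-1) := by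
              rw [Rcnt_split L β (show (0:ℕ) ≤ P+1 by omega) (show P+1 ≤ x+s-1 by omega),
                Rcnt_split L β (show P+1 ≤ Q+1 by omega) (show Q+1 ≤ x+s-1 by omega)]
              omega
            rw [e1, e2, e3, e4,
              show Rcnt L β 0 (P+1) + Rcnt L β (P+1) (Q+1) + Rcnt L β (Q+1) (x+s-1)
                = (Rcnt L β 0 (P+1) + Rcnt L β (Q+1) (x+s-1)) + Rcnt L β (P+1) (Q+1) by omega]
            exact (mod_helper (hD β c)).symm
          · have hxe : x = P + 1 := by omega
            rw [cntL_farL L' β hx, cntL_farL L β hxN, hxe]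
            have e1 : Rcnt L' β 0 (P+1-1) = Rcnt L β 0 P := by
              rw [show P+1-1 = P by omega]
              exact Rcnt_congr L β (fun j h1' h2' => hL'lo j (by omega))
            rw [e1, show P+1+s-1 = Q by omega,
              R_left L β (show P < N by omega), R_left L β (show Q < N by omega)]
            exact Nat.ModEq.add (hmod .farL β c) (hmod .pred β c)
  -- transfer of P-witnesses to Q and back
  have hbit' : ∀ w β, (∃ j, j < N ∧ nOrd P j = w ∧ L j = β) →
      ∃ j, j < N ∧ nOrd Q j = w ∧ L j = β := by
    intro w β h
    exact (cnt_pos_iff L β N Q w).mp ((hbit w β).mp ((cnt_pos_iff L β N P w).mpr h))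
  have hbit'' : ∀ w β, (∃ j, j < N ∧ nOrd Q j = w ∧ L j = β) →
      ∃ j, j < N ∧ nOrd P j = w ∧ L j = β := by
    intro w β h
    exact (cnt_pos_iff L β N P w).mp ((hbit w β).mpr ((cnt_pos_iff L β N Q w).mpr h))
  -- witness transfer
  have hA : ∀ x, x < N' → ∀ w β,
      0 < cntL L N (if x ≤ P then x else x + s) w β →
      ∃ j, j < N' ∧ nOrd x j = w ∧ L' j = β := by
    intro x hx w β hpos
    rw [cnt_pos_iff] at hpos
    obtain ⟨j, hj, hw, hβ⟩ := hpos
    by_cases hxP : x ≤ P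
    · rw [if_pos hxP] at hw
      rcases le_or_gt j P with hjP | hjP
      · exact ⟨j, by omega, hw, by rw [hL'lo j hjP]; exact hβ⟩
      · rcases le_or_gt (Q+1) j with hjQ | hjQ
        · -- j survives on the right
          by_cases hcase : x = P ∧ j = Q + 1
          · obtain ⟨hx1, hj1⟩ := hcase
            subst hx1; subst hj1
            have hwv : w = WOrd.farR := by rw [← hw]; exact nOrd_farR_iff.mpr (by omega)
            obtain ⟨j2, hj2N, hj2w, hj2β⟩ := hbit' .farR β
              ⟨Q+1, by omega, nOrd_farR_iff.mpr (by omega), hβ⟩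
            have h2 : Q + 2 ≤ j2 := nOrd_farR_iff.mp hj2w
            refine ⟨j2 - s, by omega, ?_, ?_⟩
            · rw [hwv]; exact nOrd_farR_iff.mpr (by omega)
            · rw [hL'hi (j2 - s) (by omega) (by omega), show j2 - s + s = j2 by omega]
              exact hj2β
          · have hwv : w = WOrd.farR := by rw [← hw]; exact nOrd_farR_iff.mpr (by omega)
            refine ⟨j - s, by omega, ?_, ?_⟩
            · rw [hwv]
              apply nOrd_farR_iff.mpr
              rcases Nat.lt_or_ge x P with h | h
              · omega
              · have : j ≠ Q + 1 := fun hh => hcase ⟨by omega, hh⟩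
                omega
            · rw [hL'hi (j - s) (by omega) (by omega), show j - s + s = j by omega]
              exact hβ
        · -- j is deleted: P+1 ≤ j ≤ Q
          by_cases hj1 : j = P + 1
          · subst hj1
            by_cases hxe : x = P
            · -- w = succ
              subst hxe
              have hwv : w = WOrd.succ := by rw [← hw]; exact nOrd_succ_iff.mpr rfl
              obtain ⟨j2, hj2N, hj2w, hj2β⟩ := hbit' .succ β
                ⟨x+1, by omega, nOrd_succ_iff.mpr rfl, hβ⟩
              have hj2e : j2 = Q + 1 := nOrd_succ_iff.mp hj2w
              refine ⟨x+1, by omega, ?_, ?_⟩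
              · rw [hwv]; exact nOrd_succ_iff.mpr rfl
              · rw [hL'hi (x+1) (by omega) (by omega), show x+1+s = Q+1 by omega, ← hj2e]
                exact hj2β
            · -- x < P, w = farR, witness via succ bit
              have hwv : w = WOrd.farR := by rw [← hw]; exact nOrd_farR_iff.mpr (by omega)
              obtain ⟨j2, hj2N, hj2w, hj2β⟩ := hbit' .succ β
                ⟨P+1, by omega, nOrd_succ_iff.mpr rfl, hβ⟩
              have hj2e : j2 = Q + 1 := nOrd_succ_iff.mp hj2w
              refine ⟨P+1, by omega, ?_, ?_⟩
              · rw [hwv]; exact nOrd_farR_iff.mpr (by omega)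
              · rw [hL'hi (P+1) (by omega) (by omega), show P+1+s = Q+1 by omega, ← hj2e]
                exact hj2β
          · -- j ≥ P+2 : via farR bit
            have hwv : w = WOrd.farR := by rw [← hw]; exact nOrd_farR_iff.mpr (by omega)
            obtain ⟨j2, hj2N, hj2w, hj2β⟩ := hbit' .farR β
              ⟨j, by omega, nOrd_farR_iff.mpr (by omega), hβ⟩
            have h2 : Q + 2 ≤ j2 := nOrd_farR_iff.mp hj2w
            refine ⟨j2 - s, by omega, ?_, ?_⟩
            · rw [hwv]; exact nOrd_farR_iff.mpr (by omega)
            · rw [hL'hi (j2 - s) (by omega) (by omega), show j2 - s + s = j2 by omega]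
              exact hj2β
    · rw [if_neg hxP] at hw
      have hgt : P < x := by omega
      rcases le_or_gt (Q+1) j with hjQ | hjQ
      · -- j survives on the right : shift
        refine ⟨j - s, by omega, ?_, ?_⟩
        · rw [← hw]
          have h0 := nOrd_shift x (j - s) s
          rw [show j - s + s = j by omega] at h0
          exact h0.symm
        · rw [hL'hi (j - s) (by omega) (by omega), show j - s + s = j by omega]
          exact hβ
      · rcases le_or_gt j P with hjP | hjP2
        · -- j ≤ P
          have hwv : w = WOrd.farL := by rw [← hw]; exact nOrd_farL_iff.mpr (by omega)
          by_cases hadj : x = P + 1 ∧ j = P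
          · obtain ⟨h1, h2⟩ := hadj
            rcases le_or_gt (P+2) Q with hQ2 | hQ2
            · obtain ⟨j2, hj2N, hj2w, hj2β⟩ := hbit'' .farL β
                ⟨P, by omega, nOrd_farL_iff.mpr (by omega), by rw [← h2]; exact hβ⟩
              have h3 : j2 + 2 ≤ P := nOrd_farL_iff.mp hj2w
              exact ⟨j2, by omega, by rw [hwv]; exact nOrd_farL_iff.mpr (by omega),
                by rw [hL'lo j2 (by omega)]; exact hj2β⟩
            · -- Q = P+1
              obtain ⟨j2, hj2N, hj2w, hj2β⟩ := hbit'' .pred β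
                ⟨P, by omega, nOrd_pred_iff.mpr (by omega), by rw [← h2]; exact hβ⟩
              have h3 : P = j2 + 1 := nOrd_pred_iff.mp hj2w
              exact ⟨j2, by omega, by rw [hwv]; exact nOrd_farL_iff.mpr (by omega),
                by rw [hL'lo j2 (by omega)]; exact hj2β⟩
          · have hne : ¬ (x = P + 1 ∧ j = P) := hadj
            exact ⟨j, by omega, by rw [hwv]; exact nOrd_farL_iff.mpr (by omega),
              by rw [hL'lo j hjP]; exact hβ⟩
        · -- P+1 ≤ j ≤ Q : j deleted
          by_cases hpred : x = P + 1 ∧ j = Q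
          · obtain ⟨h1, h2⟩ := hpred
            have hwv : w = WOrd.pred := by rw [← hw]; exact nOrd_pred_iff.mpr (by omega)
            refine ⟨P, by omega, by rw [hwv]; exact nOrd_pred_iff.mpr (by omega), ?_⟩
            rw [hL'lo P le_rfl, hLP]
            rw [h2] at hβ
            exact hβ
          · have hne : ¬ (x = P + 1 ∧ j = Q) := hpred
            have hwv : w = WOrd.farL := by rw [← hw]; exact nOrd_farL_iff.mpr (by omega)
            by_cases hjQe : j = Q
            · -- β = L Q = L P, use P
              refine ⟨P, by omega, by rw [hwv]; exact nOrd_farL_iff.mpr (by omega), ?_⟩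
              rw [hL'lo P le_rfl, hLP]
              rw [hjQe] at hβ
              exact hβ
            · rcases le_or_gt (j+2) Q with hj2c | hj2c
              · -- Q's farL bit
                obtain ⟨j2, hj2N, hj2w, hj2β⟩ := hbit'' .farL β
                  ⟨j, by omega, nOrd_farL_iff.mpr (by omega), hβ⟩
                have h3 : j2 + 2 ≤ P := nOrd_farL_iff.mp hj2w
                exact ⟨j2, by omega, by rw [hwv]; exact nOrd_farL_iff.mpr (by omega),
                  by rw [hL'lo j2 (by omega)]; exact hj2β⟩
              · -- j = Q - 1 : Q's pred bit
                obtain ⟨j2, hj2N, hj2w, hj2β⟩ := hbit'' .pred β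
                  ⟨j, by omega, nOrd_pred_iff.mpr (by omega), hβ⟩
                have h3 : P = j2 + 1 := nOrd_pred_iff.mp hj2w
                exact ⟨j2, by omega, by rw [hwv]; exact nOrd_farL_iff.mpr (by omega),
                  by rw [hL'lo j2 (by omega)]; exact hj2β⟩
  -- pair transfer
  have hC : ∀ x y, x < N' → y < N' →
      ∃ a b, a < N ∧ b < N ∧ L a = L' x ∧ L b = L' y ∧ nOrd a b = nOrd x y := by
    intro x y hx hy
    by_cases hxP : x ≤ P <;> by_cases hyP : y ≤ P
    · exact ⟨x, y, by omega, by omega, (hL'lo x hxP).symm, (hL'lo y hyP).symm, rfl⟩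
    · by_cases hxe : x = P
      · refine ⟨Q, y + s, by omega, by omega, ?_, (hL'hi y (by omega) hy).symm, ?_⟩
        · rw [hL'lo x hxP, hxe, hLP]
        · rw [hxe]
          by_cases hy1 : y = P + 1
          · rw [hy1, show P+1+s = Q+1 by omega,
              show nOrd Q (Q+1) = WOrd.succ from nOrd_succ_iff.mpr rfl,
              show nOrd P (P+1) = WOrd.succ from nOrd_succ_iff.mpr rfl]
          · rw [show nOrd Q (y+s) = WOrd.farR from nOrd_farR_iff.mpr (by omega),
              show nOrd P y = WOrd.farR from nOrd_farR_iff.mpr (by omega)]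
      · refine ⟨x, y + s, by omega, by omega, (hL'lo x hxP).symm,
          (hL'hi y (by omega) hy).symm, ?_⟩
        rw [show nOrd x (y+s) = WOrd.farR from nOrd_farR_iff.mpr (by omega),
          show nOrd x y = WOrd.farR from nOrd_farR_iff.mpr (by omega)]
    · by_cases hye : y = P
      · refine ⟨x + s, Q, by omega, by omega, (hL'hi x (by omega) hx).symm, ?_, ?_⟩
        · rw [hL'lo y hyP, hye, hLP]
        · rw [hye]
          by_cases hx1 : x = P + 1
          · rw [hx1, show P+1+s = Q+1 by omega,
              show nOrd (Q+1) Q = WOrd.pred from nOrd_pred_iff.mpr rfl,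
              show nOrd (P+1) P = WOrd.pred from nOrd_pred_iff.mpr rfl]
          · rw [show nOrd (x+s) Q = WOrd.farL from nOrd_farL_iff.mpr (by omega),
              show nOrd x P = WOrd.farL from nOrd_farL_iff.mpr (by omega)]
      · refine ⟨x + s, y, by omega, by omega, (hL'hi x (by omega) hx).symm,
          (hL'lo y hyP).symm, ?_⟩
        rw [show nOrd (x+s) y = WOrd.farL from nOrd_farL_iff.mpr (by omega),
          show nOrd x y = WOrd.farL from nOrd_farL_iff.mpr (by omega)]
    · exact ⟨x + s, y + s, by omega, by omega, (hL'hi x (by omega) hx).symm,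
        (hL'hi y (by omega) hy).symm, nOrd_shift x y s⟩
  -- the lab-value facts
  have hLlab : ∀ j : Fin N, L j.val = lab j := fun j => Lext_eq lab j
  have hL'xo : ∀ x, x < N' → L' x = L (if x ≤ P then x else x + s) := by
    intro x hx
    split_ifs with h
    · exact hL'lo x h
    · exact hL'hi x (by omega) hx
  refine ⟨fun x => L' x.val, ?_, ?_, ?_⟩
  · -- universal conjunct
    intro i j
    obtain ⟨a, b, haN, hbN, hLa, hLb, hord⟩ := hC i.val j.val i.isLt j.isLt
    have h0 := hW.1 ⟨a, haN⟩ ⟨b, hbN⟩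
    rw [ordOf_eq_nOrd] at h0 ⊢
    rw [← hLlab ⟨a, haN⟩, ← hLlab ⟨b, hbN⟩] at h0
    show φ.chi (L' i.val) (L' j.val) (nOrd i.val j.val) = true
    rw [← hLa, ← hLb, ← hord]
    exact h0
  · -- existential conjuncts
    intro c x
    have hxoN : (if (x : ℕ) ≤ P then (x : ℕ) else (x : ℕ) + s) < N := by
      split_ifs <;> omega
    obtain ⟨j0, hj0⟩ := hW.2.1 c ⟨_, hxoN⟩
    rw [ordOf_eq_nOrd] at hj0
    have hpos : 0 < cntL L N (if (x : ℕ) ≤ P then (x : ℕ) else (x : ℕ) + s)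
        (nOrd (if (x : ℕ) ≤ P then (x : ℕ) else (x : ℕ) + s) j0.val) (L j0.val) := by
      rw [cnt_pos_iff]
      exact ⟨j0.val, j0.isLt, rfl, rfl⟩
    obtain ⟨j1, hj1N, hj1w, hj1β⟩ := hA x.val x.isLt _ _ hpos
    refine ⟨⟨j1, hj1N⟩, ?_⟩
    rw [ordOf_eq_nOrd]
    show φ.chis c (L' x.val) (L' j1) (nOrd x.val j1) = true
    rw [hL'xo x.val x.isLt, hj1β, hj1w, hLlab j0, hLlab ⟨_, hxoN⟩]
    exact hj0
  · -- counting conjuncts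
    intro c x
    have hxoN : (if (x : ℕ) ≤ P then (x : ℕ) else (x : ℕ) + s) < N := by
      split_ifs <;> omega
    have hbow := hW.2.2 c ⟨_, hxoN⟩
    have eold : (Finset.univ.filter fun j : Fin N =>
          φ.psi c (lab ⟨_, hxoN⟩) (lab j) (ordOf ⟨_, hxoN⟩ j) = true).card
        = ∑ β : τ → Bool, ∑ w : WOrd,
            if φ.psi c (lab ⟨_, hxoN⟩) β w = true
            then cntL L N (if (x : ℕ) ≤ P then (x : ℕ) else (x : ℕ) + s) w β else 0 := by
      rw [← decomp L _ _ (φ.psi c (lab ⟨_, hxoN⟩)),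
        ← finCard N (fun j => φ.psi c (lab ⟨_, hxoN⟩) (L j) (nOrd (if (x : ℕ) ≤ P then (x : ℕ) else (x : ℕ) + s) j) = true)]
      congr 1
      apply Finset.filter_congr
      intro j _
      rw [ordOf_eq_nOrd, hLlab j]
    have enew : (Finset.univ.filter fun j : Fin N' =>
          φ.psi c (L' x.val) (L' j.val) (ordOf x j) = true).card
        = ∑ β : τ → Bool, ∑ w : WOrd,
            if φ.psi c (L' x.val) β w = true then cntL L' N' x.val w β else 0 := by
      rw [← decomp L' _ _ (φ.psi c (L' x.val)),
        ← finCard N' (fun j => φ.psi c (L' x.val) (L' j) (nOrd x.val j) = true)]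
      congr 1
      apply Finset.filter_congr
      intro j _
      rw [ordOf_eq_nOrd]
    have hψeq : φ.psi c (L' x.val) = φ.psi c (lab ⟨_, hxoN⟩) := by
      rw [hL'xo x.val x.isLt, hLlab ⟨_, hxoN⟩]
    have key : (Finset.univ.filter fun j : Fin N' =>
          φ.psi c (L' x.val) (L' j.val) (ordOf x j) = true).card % φ.l c
        = (Finset.univ.filter fun j : Fin N =>
          φ.psi c (lab ⟨_, hxoN⟩) (lab j) (ordOf ⟨_, hxoN⟩ j) = true).card % φ.l c := by
      rw [eold, enew, hψeq]
      apply sum_mod_congr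
      intro β w
      by_cases hψ : φ.psi c (lab ⟨_, hxoN⟩) β w = true
      · rw [if_pos hψ, if_pos hψ]
        exact hB x.val x.isLt w β c
      · rw [if_neg hψ, if_neg hψ]
    show φ.bow c ((Finset.univ.filter fun j : Fin N' =>
          φ.psi c (L' x.val) (L' j.val) (ordOf x j) = true).card % φ.l c)
    rw [key]
    exact hbow

end Shrink

/-- **Small model property over words.** Every normal-form FO²MOD[≤,succ]
formula satisfiable over finite words has a model of size at most `f(φ)`. -/
theorem stmt_4 {τ : Type} [Fintype τ] [DecidableEq τ] (φ : NF τ)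
    (hsat : ∃ (N : ℕ) (lab : Fin N → τ → Bool), 0 < N ∧ WSat φ N lab) :
    ∃ (N : ℕ) (lab : Fin N → τ → Bool), 0 < N ∧ N ≤ fsize φ ∧ WSat φ N lab := by
  classical
  obtain ⟨N0, lab0, hN0, hS0⟩ := hsat
  suffices H : ∀ N : ℕ, ∀ lab : Fin N → τ → Bool, 0 < N → WSat φ N lab →
      ∃ (N' : ℕ) (lab' : Fin N' → τ → Bool), 0 < N' ∧ N' ≤ fsize φ ∧ WSat φ N' lab' by
    exact H N0 lab0 hN0 hS0
  intro N
  induction N using Nat.strong_induction_on with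
  | _ N ih =>
    intro lab hN hS
    by_cases hle : N ≤ fsize φ
    · exact ⟨N, lab, hN, hle, hS⟩
    · push_neg at hle
      have hcard : Fintype.card (WOrd → (τ → Bool) → Bool × ((c : Fin φ.m) → Fin (φ.l c)))
          = fsize φ := by
        rw [Fintype.card_fun, Fintype.card_fun, Fintype.card_prod, Fintype.card_bool,
          Fintype.card_pi, Fintype.card_fun, Fintype.card_bool,
          show Fintype.card WOrd = 5 from rfl]
        simp only [Fintype.card_fin]
        rw [fsize, ← pow_mul]; ring
      obtain ⟨p, q, hpq, hFT⟩ := Fintype.exists_ne_map_eq_of_card_lt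
        (fun i : Fin N => (fun w β => (decide (0 < cntL (Lext lab) N i.val w β),
           fun c : Fin φ.m => (⟨cntL (Lext lab) N i.val w β % φ.l c,
             Nat.mod_lt _ (φ.lpos c)⟩ : Fin (φ.l c)))))
        (by rw [hcard, Fintype.card_fin]; omega)
      have main : ∀ (A B : Fin N), A.val < B.val →
          ((fun w β => (decide (0 < cntL (Lext lab) N A.val w β),
             fun c : Fin φ.m => (⟨cntL (Lext lab) N A.val w β % φ.l c,
               Nat.mod_lt _ (φ.lpos c)⟩ : Fin (φ.l c))))
           = (fun w β => (decide (0 < cntL (Lext lab) N B.val w β),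
             fun c : Fin φ.m => (⟨cntL (Lext lab) N B.val w β % φ.l c,
               Nat.mod_lt _ (φ.lpos c)⟩ : Fin (φ.l c))))) →
          ∃ (N' : ℕ) (lab' : Fin N' → τ → Bool), 0 < N' ∧ N' ≤ fsize φ ∧ WSat φ N' lab' := by
        intro A B hlt hEq
        have hbit : ∀ w β, 0 < cntL (Lext lab) N A.val w β ↔ 0 < cntL (Lext lab) N B.val w β := by
          intro w β
          have h1 := congrArg Prod.fst (congrFun (congrFun hEq w) β)
          simpa using decide_eq_decide.mp h1
        have hmod : ∀ w β (c : Fin φ.m),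
            cntL (Lext lab) N A.val w β % φ.l c = cntL (Lext lab) N B.val w β % φ.l c := by
          intro w β c
          have h2 := congrArg (fun z => (z.2 c).val) (congrFun (congrFun hEq w) β)
          simpa using h2
        obtain ⟨lab', hW'⟩ := shrink φ N lab hS A.val B.val hlt B.isLt hbit hmod
        have hBlt := B.isLt
        exact ih (N - (B.val - A.val)) (by omega) lab' (by omega) hW'
      rcases Nat.lt_or_ge p.val q.val with h | h
      · exact main p q h hFT
      · have hne : q.val < p.val := by
          rcases Nat.lt_or_ge q.val p.val with h' | h'
          · exact h'
          · exact absurd (Fin.ext (by omega)) hpq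
        exact main q p hne hFT.symm
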